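/- Let F be a nonempty compact convex subset of ℝⁿ. Then the set of vectors c ∈ ℝⁿ for which the linear functional x ↦ ⟨c, x⟩ has a unique maximizer over F is a residual (comeagre) subset of ℝⁿ. -/

import Mathlib

open Filter

section Aux

variable {n : ℕ}

private lemma inner_shift (c z : EuclideanSpace ℝ (Fin n)) (i : Fin n) (t : ℝ) :
    (inner ℝ (c + t • EuclideanSpace.single i (1 : ℝ)) z : ℝ) = inner ℝ c z + t * z i := by
  rw [inner_add_left, real_inner_smul_left, EuclideanSpace.inner_single_left]
  simp

/-- The "bad" set: directions whose maximizer set has width at least `ε` in coordinate `i`. -/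
private def badSet (F : Set (EuclideanSpace ℝ (Fin n))) (i : Fin n) (ε : ℝ) :
    Set (EuclideanSpace ℝ (Fin n)) :=
  {c | ∃ x, (x ∈ F ∧ ∀ z ∈ F, (inner ℝ c z : ℝ) ≤ inner ℝ c x) ∧
        ∃ y, (y ∈ F ∧ ∀ z ∈ F, (inner ℝ c z : ℝ) ≤ inner ℝ c y) ∧ ε ≤ x i - y i}

private lemma maximizer_coord_mono {F : Set (EuclideanSpace ℝ (Fin n))}
    {c x y : EuclideanSpace ℝ (Fin n)} {i : Fin n} {t s : ℝ} (hts : t < s)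
    (hxF : x ∈ F) (hyF : y ∈ F)
    (hx : ∀ z ∈ F, (inner ℝ (c + t • EuclideanSpace.single i (1 : ℝ)) z : ℝ) ≤
      inner ℝ (c + t • EuclideanSpace.single i (1 : ℝ)) x)
    (hy : ∀ z ∈ F, (inner ℝ (c + s • EuclideanSpace.single i (1 : ℝ)) z : ℝ) ≤
      inner ℝ (c + s • EuclideanSpace.single i (1 : ℝ)) y) :
    x i ≤ y i := by
  have h1 := hx y hyF
  have h2 := hy x hxF
  rw [inner_shift, inner_shift] at h1
  rw [inner_shift, inner_shift] at h2
  nlinarith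

private lemma badSet_closed (F : Set (EuclideanSpace ℝ (Fin n))) (hcomp : IsCompact F)
    (i : Fin n) (ε : ℝ) : IsClosed (badSet F i ε) := by
  apply IsSeqClosed.isClosed
  intro u c hu hlim
  choose x hx y hy hgap using hu
  obtain ⟨a, haF, φ, hφ, hax⟩ := hcomp.tendsto_subseq (fun m => (hx m).1)
  obtain ⟨b, hbF, ψ, hψ, hby⟩ := hcomp.tendsto_subseq (fun m => (hy (φ m)).1)
  have hclim : Filter.Tendsto (fun m => u (φ (ψ m))) atTop (nhds c) :=
    hlim.comp ((hφ.comp hψ).tendsto_atTop)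
  have haxlim : Filter.Tendsto (fun m => x (φ (ψ m))) atTop (nhds a) :=
    hax.comp hψ.tendsto_atTop
  have hmaxa : ∀ z ∈ F, (inner ℝ c z : ℝ) ≤ inner ℝ c a := by
    intro z hz
    refine le_of_tendsto_of_tendsto' (hclim.inner (tendsto_const_nhds (x := z)))
      (hclim.inner haxlim) (fun m => ?_)
    exact (hx (φ (ψ m))).2 z hz
  have hmaxb : ∀ z ∈ F, (inner ℝ c z : ℝ) ≤ inner ℝ c b := by
    intro z hz
    refine le_of_tendsto_of_tendsto' (hclim.inner (tendsto_const_nhds (x := z)))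
      (hclim.inner hby) (fun m => ?_)
    exact (hy (φ (ψ m))).2 z hz
  have hgap' : ε ≤ a i - b i := by
    have t1 : Filter.Tendsto (fun m => x (φ (ψ m)) i - y (φ (ψ m)) i) atTop
        (nhds (a i - b i)) := by
      exact (((EuclideanSpace.proj i).continuous.tendsto a).comp haxlim).sub
        (((EuclideanSpace.proj i).continuous.tendsto b).comp hby)
    exact ge_of_tendsto' t1 (fun m => hgap (φ (ψ m)))
  exact ⟨a, ⟨haF, hmaxa⟩, b, ⟨hbF, hmaxb⟩, hgap'⟩

private lemma badSet_compl_dense (F : Set (EuclideanSpace ℝ (Fin n))) (hcomp : IsCompact F)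
    (i : Fin n) {ε : ℝ} (hε : 0 < ε) : Dense (badSet F i ε)ᶜ := by
  rw [Metric.dense_iff]
  intro c δ hδ
  by_contra hcon
  rw [Set.not_nonempty_iff_eq_empty] at hcon
  have hall : ∀ c', c' ∈ Metric.ball c δ → c' ∈ badSet F i ε := by
    intro c' hc'
    by_contra h
    exact (Set.eq_empty_iff_forall_notMem.1 hcon c') ⟨hc', h⟩
  -- bound on coordinates of F
  obtain ⟨R, hR⟩ := isBounded_iff_forall_norm_le.1 hcomp.isBounded
  have hcoord : ∀ x ∈ F, |x i| ≤ R := by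
    intro x hxF
    have h1 : |(inner ℝ (EuclideanSpace.single i (1 : ℝ)) x : ℝ)| ≤
        ‖EuclideanSpace.single i (1 : ℝ)‖ * ‖x‖ := abs_real_inner_le_norm _ _
    rw [EuclideanSpace.inner_single_left, EuclideanSpace.norm_single] at h1
    simpa using h1.trans (by simpa using hR x hxF)
  -- the increasing sequence of shifts
  set tj : ℕ → ℝ := fun j => δ * (1 - 1 / (j + 2)) with htj
  have htj_pos : ∀ j, 0 < tj j := by
    intro j
    have h2 : (1 : ℝ) / (j + 2) < 1 := by
      rw [div_lt_one (by positivity)]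
      have : (0:ℝ) ≤ (j:ℝ) := Nat.cast_nonneg j
      linarith
    have : 0 < 1 - 1 / ((j : ℝ) + 2) := by linarith
    positivity
  have htj_lt : ∀ j, tj j < δ := by
    intro j
    have h2 : (0 : ℝ) < 1 / (j + 2) := by positivity
    simp only [htj]
    nlinarith [mul_pos hδ h2]
  have htj_mono : ∀ j : ℕ, tj j < tj (j + 1) := by
    intro j
    have h2 : (1 : ℝ) / (j + 1 + 2) < 1 / (j + 2) := by
      apply one_div_lt_one_div_of_lt (by positivity)
      push_cast; linarith
    have := htj_pos j
    simp only [htj]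
    push_cast
    nlinarith
  have hmem : ∀ j : ℕ, c + tj j • EuclideanSpace.single i (1 : ℝ) ∈ badSet F i ε := by
    intro j
    apply hall
    rw [Metric.mem_ball, dist_eq_norm]
    have : ‖c + tj j • EuclideanSpace.single i (1 : ℝ) - c‖ = tj j := by
      rw [add_sub_cancel_left, norm_smul, EuclideanSpace.norm_single]
      simp [abs_of_pos (htj_pos j)]
    rw [this]; exact htj_lt j
  choose x hx y hy hgap using hmem
  -- each step increases `x · i` by at least ε
  have hstep : ∀ j : ℕ, x j i + ε ≤ x (j + 1) i := by
    intro j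
    have h1 : x j i ≤ y (j + 1) i :=
      maximizer_coord_mono (htj_mono j) (hx j).1 (hy (j + 1)).1 (hx j).2 (hy (j + 1)).2
    have h2 := hgap (j + 1)
    linarith
  have hkey : ∀ j : ℕ, x 0 i + j * ε ≤ x j i := by
    intro j
    induction j with
    | zero => simp
    | succ j ih =>
      have := hstep j
      push_cast
      nlinarith
  obtain ⟨N, hN⟩ := exists_nat_gt ((2 * R) / ε)
  have hN' : 2 * R < N * ε := by
    rwa [div_lt_iff₀ hε] at hN
  have h0 := hcoord (x 0) (hx 0).1
  have hNc := hcoord (x N) (hx N).1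
  have := hkey N
  rw [abs_le] at h0 hNc
  linarith [h0.1, hNc.2]

end Aux

/-- Generic uniqueness: for a nonempty compact convex set `F ⊆ ℝⁿ`, the set of
vectors `c` whose linear functional `x ↦ ⟪c, x⟫` has a unique maximizer over `F`
is residual (comeagre) in `ℝⁿ`. -/
theorem generic_unique_maximizer_residual (n : ℕ)
    (F : Set (EuclideanSpace ℝ (Fin n)))
    (hne : F.Nonempty) (hcomp : IsCompact F) (hconv : Convex ℝ F) :
    {c : EuclideanSpace ℝ (Fin n) |
      ∃! x, x ∈ F ∧ ∀ y ∈ F, (inner ℝ c y : ℝ) ≤ inner ℝ c x}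
      ∈ residual (EuclideanSpace ℝ (Fin n)) := by
  have hsub : (⋂ p : Fin n × ℕ, (badSet F p.1 (1 / (p.2 + 1)))ᶜ) ⊆
      {c : EuclideanSpace ℝ (Fin n) |
        ∃! x, x ∈ F ∧ ∀ y ∈ F, (inner ℝ c y : ℝ) ≤ inner ℝ c x} := by
    intro c hc
    simp only [Set.mem_iInter, Set.mem_compl_iff] at hc
    obtain ⟨x₀, hx₀F, hx₀max⟩ := hcomp.exists_isMaxOn hne
      ((continuous_const.inner continuous_id).continuousOn
        (f := fun x : EuclideanSpace ℝ (Fin n) => (inner ℝ c x : ℝ)))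
    have hle : ∀ x y : EuclideanSpace ℝ (Fin n),
        (x ∈ F ∧ ∀ z ∈ F, (inner ℝ c z : ℝ) ≤ inner ℝ c x) →
        (y ∈ F ∧ ∀ z ∈ F, (inner ℝ c z : ℝ) ≤ inner ℝ c y) →
        ∀ i : Fin n, x i - y i ≤ 0 := by
      intro x y hx hy i
      by_contra h
      push_neg at h
      obtain ⟨k, hk⟩ := exists_nat_one_div_lt h
      exact hc (i, k) ⟨x, hx, y, hy, le_of_lt hk⟩
    refine ⟨x₀, ⟨hx₀F, fun y hy => hx₀max hy⟩, ?_⟩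
    rintro y ⟨hyF, hymax⟩
    have h1 := hle y x₀ ⟨hyF, hymax⟩ ⟨hx₀F, fun z hz => hx₀max hz⟩
    have h2 := hle x₀ y ⟨hx₀F, fun z hz => hx₀max hz⟩ ⟨hyF, hymax⟩
    ext i
    have := h1 i
    have := h2 i
    linarith
  refine Filter.mem_of_superset ?_ hsub
  refine (countable_iInter_mem).2 (fun p => ?_)
  exact residual_of_dense_open (badSet_closed F hcomp p.1 _).isOpen_compl
    (badSet_compl_dense F hcomp p.1 (by positivity))
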